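/- Let d > 1 be squarefree, F = ℚ(√(−3d)), and for a positive integer e let M_e denote the ring class field of the order ℤ[e√(−3d)] in F. Let u ∈ O(d) have cubic norm, ν = u^(1/3) real, c a positive even integer, and c' its odd part. If the cube roots of unity lie in M_{c'} and [M_c : M_{c'}] = 2, then ν ∈ M_c implies ν ∈ M_{c'}. -/

import Mathlib

open NumberField

/-- The rational prime `p` splits completely in the subfield `M ⊆ ℂ`:
`(p)` is a product of `[M:ℚ]` distinct primes of the integral closure of `ℤ` in `M`. -/
def SplitsCompletelyC (p : ℕ) (M : IntermediateField ℚ ℂ) : Prop :=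
  ∃ s : Finset (Ideal (integralClosure ℤ M)), s.card = Module.finrank ℚ M ∧
    (∀ P ∈ s, P.IsPrime) ∧
    Ideal.span {(p : integralClosure ℤ M)} = ∏ P ∈ s, P

/-- `M ⊆ ℂ` is the ring class field of the order of discriminant `-4n` in `ℚ(√-n)`,
characterized (following Cox) as the finite Galois extension of `ℚ` containing `√-n`
in which the odd primes `p ∤ n` splitting completely are exactly those of the form
`p = x² + n y²`. -/
def IsRingClassFieldC (n : ℤ) (M : IntermediateField ℚ ℂ) : Prop :=
  FiniteDimensional ℚ M ∧ IsGalois ℚ M ∧ (∃ z : M, (z : ℂ) ^ 2 = (-n : ℤ)) ∧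
  ∀ p : ℕ, p.Prime → Odd p → ¬((p : ℤ) ∣ n) →
    (SplitsCompletelyC p M ↔ ∃ x y : ℤ, (p : ℤ) = x ^ 2 + n * y ^ 2)

set_option maxHeartbeats 1000000 in
set_option synthInstance.maxHeartbeats 400000 in
/-- with `M_e` the ring class field of the order `ℤ[e√-3d]` in
`F = ℚ(√-3d)`, `u ∈ O(d)` of cubic norm, `ν = u^(1/3)` real, `c` a positive even
integer with odd part `c'`: if the cube roots of unity lie in `M_{c'}` and
`[M_c : M_{c'}] = 2`, then `ν ∈ M_c` implies `ν ∈ M_{c'}`. -/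
theorem stmt_19 (d : ℤ) (hd : 1 < d) (hsf : Squarefree d)
    (a b : ℚ) (huint : IsIntegral ℤ ((a : ℝ) + b * Real.sqrt d))
    (n : ℤ) (hn : a ^ 2 - d * b ^ 2 = (n : ℚ) ^ 3)
    (ν : ℝ) (hν : ν ^ 3 = (a : ℝ) + b * Real.sqrt d)
    (c c' : ℕ) (hc : 0 < c) (hce : Even c) (hc' : Odd c') (hcc' : ∃ k : ℕ, c = 2 ^ k * c')
    (Mc Mc' : IntermediateField ℚ ℂ) (hle : Mc' ≤ Mc)
    (hMc : IsRingClassFieldC ((c : ℤ) ^ 2 * 3 * d) Mc)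
    (hMc' : IsRingClassFieldC ((c' : ℤ) ^ 2 * 3 * d) Mc')
    (hroots : ∀ z : ℂ, z ^ 3 = 1 → z ∈ Mc')
    (hdeg : Module.finrank ℚ Mc = 2 * Module.finrank ℚ Mc') :
    (ν : ℂ) ∈ Mc → (ν : ℂ) ∈ Mc' := by
  intro hmem
  haveI : FiniteDimensional ℚ Mc' := hMc'.1
  haveI : FiniteDimensional ℚ Mc := hMc.1
  -- Step A: √d ∈ Mc'
  have hd0 : (0 : ℝ) ≤ (d : ℝ) := by exact_mod_cast (by omega : (0:ℤ) ≤ d)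
  have h3R : (Real.sqrt 3 : ℝ) ^ 2 = 3 := Real.sq_sqrt (by norm_num)
  have h3 : ((Real.sqrt 3 : ℝ) : ℂ) ^ 2 = 3 := by exact_mod_cast congrArg (fun x : ℝ => (x : ℂ)) h3R
  have hI : (Complex.I) ^ 2 = -1 := Complex.I_sq
  set ζ : ℂ := ((-1 : ℂ) + Complex.I * (Real.sqrt 3 : ℝ)) / 2 with hζdef
  have hq : ζ ^ 2 + ζ + 1 = 0 := by
    rw [hζdef]
    linear_combination (Complex.I ^ 2 / 4) * h3 + (3 / 4) * hI
  have hζ3 : ζ ^ 3 = 1 := by linear_combination (ζ - 1) * hq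
  have hζmem : ζ ∈ Mc' := hroots ζ hζ3
  obtain ⟨z, hz⟩ := hMc'.2.2.1
  have hzval : ((z : ℂ)) ^ 2 = -(((c' : ℂ)) ^ 2 * 3 * (d : ℂ)) := by
    rw [hz]; push_cast; ring
  set s : ℂ := 2 * ζ + 1 with hsdef
  have hsmem : s ∈ Mc' := by
    have h2m : (2 : ℂ) ∈ Mc' := by
      have := SubfieldClass.ratCast_mem Mc' (2 : ℚ); exact_mod_cast this
    exact add_mem (mul_mem h2m hζmem) (one_mem _)
  have hs2 : s ^ 2 = -3 := by rw [hsdef]; linear_combination 4 * hq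
  have hsne : s ≠ 0 := by
    intro h; rw [h] at hs2; norm_num at hs2
  have hc'ne : (c' : ℂ) ≠ 0 := by
    have : c' ≠ 0 := by rintro rfl; simp [Nat.odd_iff] at hc'
    exact_mod_cast Nat.cast_ne_zero.mpr this
  set t : ℂ := (z : ℂ) / ((c' : ℂ) * s) with htdef
  have htmem : t ∈ Mc' := by
    refine div_mem (z.2) (mul_mem ?_ hsmem)
    exact_mod_cast IntermediateField.natCast_mem Mc' c'
  have ht2 : t ^ 2 = (d : ℂ) := by
    rw [htdef, div_pow, mul_pow, hzval, hs2]
    field_simp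
  have hsdC : ((Real.sqrt (d : ℝ) : ℝ) : ℂ) ^ 2 = (d : ℂ) := by
    have := Real.sq_sqrt hd0
    exact_mod_cast congrArg (fun x : ℝ => (x : ℂ)) this
  have hsd : ((Real.sqrt (d : ℝ) : ℝ) : ℂ) ∈ Mc' := by
    have hfac : (((Real.sqrt (d:ℝ) : ℝ) : ℂ) - t) * (((Real.sqrt (d:ℝ) : ℝ) : ℂ) + t) = 0 := by
      linear_combination hsdC - ht2
    rcases mul_eq_zero.mp hfac with h | h
    · rw [sub_eq_zero.mp h]; exact htmem
    · have : ((Real.sqrt (d:ℝ) : ℝ) : ℂ) = -t := by linear_combination h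
      rw [this]; exact neg_mem htmem
  -- Step B: u ∈ Mc'
  set u : ℂ := (a : ℂ) + (b : ℂ) * ((Real.sqrt (d : ℝ) : ℝ) : ℂ) with hudef
  have humem : u ∈ Mc' := by
    refine add_mem ?_ (mul_mem ?_ hsd)
    · exact SubfieldClass.ratCast_mem Mc' a
    · exact SubfieldClass.ratCast_mem Mc' b
  set νc : ℂ := ((ν : ℝ) : ℂ) with hνcdef
  have hνc3 : νc ^ 3 = u := by
    rw [hνcdef, hudef]
    exact_mod_cast congrArg (fun x : ℝ => (x : ℂ)) hν
  -- Step C: minimal polynomial setup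
  set K := Mc' with hK
  set U : K := ⟨u, humem⟩ with hU
  set P : Polynomial K := Polynomial.X ^ 3 - Polynomial.C U with hPdef
  have hPmonic : P.Monic := Polynomial.monic_X_pow_sub_C U (by norm_num)
  have hPdeg : P.natDegree = 3 := Polynomial.natDegree_X_pow_sub_C
  have halg : (algebraMap K ℂ) U = u := rfl
  have haev : (Polynomial.aeval νc) P = 0 := by
    rw [hPdef]
    simp only [map_sub, map_pow, Polynomial.aeval_X, Polynomial.aeval_C, halg]
    rw [hνc3, sub_self]
  have hint : IsIntegral K νc := ⟨P, hPmonic, haev⟩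
  -- Step D: degree divisibility
  set L := IntermediateField.extendScalars hle with hL
  have hx : νc ∈ L := hmem
  set x : L := ⟨νc, hx⟩ with hxdef
  have hrel : Module.finrank K L = 2 := by
    have h1 := IntermediateField.finrank_bot_mul_relfinrank hle
    have h2 := IntermediateField.relfinrank_eq_finrank_of_le hle
    have hpos : 0 < Module.finrank ℚ Mc' := Module.finrank_pos
    rw [hdeg] at h1
    have : IntermediateField.relfinrank Mc' Mc = 2 := by
      have := Nat.eq_of_mul_eq_mul_left hpos (by linarith [h1] : Module.finrank ℚ Mc' * IntermediateField.relfinrank Mc' Mc = Module.finrank ℚ Mc' * 2)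
      exact this
    rw [← h2]; exact this
  haveI : FiniteDimensional K L := Module.finite_of_finrank_pos (by rw [hrel]; norm_num)
  have hminEq : minpoly K νc = minpoly K x := by
    have : νc = algebraMap L ℂ x := rfl
    rw [this, minpoly.algebraMap_eq (algebraMap L ℂ).injective]
  have hxint : IsIntegral K x := IsIntegral.of_finite K x
  have hdvd2 : (minpoly K νc).natDegree ∣ 2 := by
    rw [hminEq, ← hrel]
    exact minpoly.degree_dvd hxint
  have hPdvd : minpoly K νc ∣ P := minpoly.dvd K νc haev
  have hndpos : 0 < (minpoly K νc).natDegree := minpoly.natDegree_pos hint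
  rcases (Nat.dvd_prime Nat.prime_two).mp hdvd2 with h1 | h2
  · -- degree 1: νc ∈ K
    have hmono : (minpoly K νc).Monic := minpoly.monic hint
    have heq := hmono.eq_X_add_C h1
    have := minpoly.aeval K νc
    rw [heq] at this
    simp only [map_add, Polynomial.aeval_X, Polynomial.aeval_C] at this
    have : νc = algebraMap K ℂ (-(minpoly K νc).coeff 0) := by
      rw [map_neg]; linear_combination this
    rw [this]
    exact (-(minpoly K νc).coeff 0).2
  · -- degree 2: the cofactor gives a root w ∈ K of X³ - U
    obtain ⟨r, hPr⟩ := hPdvd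
    have hmono : (minpoly K νc).Monic := minpoly.monic hint
    have hrmonic : r.Monic := hmono.of_mul_monic_left (hPr ▸ hPmonic)
    have hrne : r ≠ 0 := hrmonic.ne_zero
    have hmne : minpoly K νc ≠ 0 := hmono.ne_zero
    have hrdeg : r.natDegree = 1 := by
      have := Polynomial.natDegree_mul hmne hrne
      rw [← hPr, hPdeg, h2] at this
      omega
    have hreq := hrmonic.eq_X_add_C hrdeg
    set w : K := -(r.coeff 0) with hwdef
    have hweval : P.eval w = 0 := by
      rw [hPr, Polynomial.eval_mul]
      have : r.eval w = 0 := by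
        rw [hreq]; simp [hwdef]
      rw [this, mul_zero]
    have hw3 : w ^ 3 = U := by
      rw [hPdef] at hweval
      simp only [Polynomial.eval_sub, Polynomial.eval_pow, Polynomial.eval_X,
        Polynomial.eval_C] at hweval
      linear_combination hweval
    have hw3C : ((w : ℂ)) ^ 3 = u := by
      have := congrArg (fun y : K => (y : ℂ)) hw3
      push_cast at this
      exact congrArg (fun y : K => (y : ℂ)) hw3
    by_cases hν0 : νc = 0
    · rw [hν0]; exact zero_mem _
    · have hune : u ≠ 0 := by rw [← hνc3]; exact pow_ne_zero 3 hν0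
      have hwne : ((w : ℂ)) ≠ 0 := by
        intro h; rw [h] at hw3C; simp at hw3C; exact hune hw3C.symm
      have hzeta : (νc / (w : ℂ)) ^ 3 = 1 := by
        rw [div_pow, hνc3, hw3C, div_self hune]
      have hmem' : νc / (w : ℂ) ∈ Mc' := hroots _ hzeta
      have : νc = (νc / (w : ℂ)) * (w : ℂ) := by field_simp
      rw [this]
      exact mul_mem hmem' w.2
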